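/- Let G be a group, ρ a unitary representation of G on a complex Hilbert space H, v ∈ H a vector with ‖v‖ = 1, and ε > 0. If Re⟨ρ(g)v, v⟩ > 1 − ε for every g ∈ G, then there exists a vector w ∈ H with ρ(g)w = w for all g ∈ G and ‖w − v‖ ≤ √(2ε). -/

import Mathlib

open scoped InnerProductSpace

set_option maxHeartbeats 1000000 in
/-- **Existence of almost-invariant fixed vectors** (key step in the proof of
Proposition 2.1(a)): if all matrix coefficients `⟨ρ(g)v, v⟩` of a unit vector `v` in a
unitary representation have real part `> 1 - ε`, then there is an invariant vector `w`
with `‖w - v‖ ≤ √(2ε)`. -/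
theorem exists_fixed_vector_near {G : Type*} [Group G] {H : Type*} [NormedAddCommGroup H]
    [InnerProductSpace ℂ H] [CompleteSpace H]
    (ρ : G →* unitary (H →L[ℂ] H)) (v : H) (hv : ‖v‖ = 1) (ε : ℝ) (hε : 0 < ε)
    (h : ∀ g : G, 1 - ε < (⟪(ρ g : H →L[ℂ] H) v, v⟫_ℂ).re) :
    ∃ w : H, (∀ g : G, (ρ g : H →L[ℂ] H) w = w) ∧ ‖w - v‖ ≤ Real.sqrt (2 * ε) := by
  letI : InnerProductSpace ℝ H := InnerProductSpace.rclikeToReal ℂ H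
  have hre : ∀ x y : H, ⟪x, y⟫_ℝ = (⟪x, y⟫_ℂ).re := fun x y => rfl
  set S : Set H := Set.range (fun g : G => (ρ g : H →L[ℂ] H) v) with hS
  set C : Set H := closure (convexHull ℝ S) with hC
  have hmul : ∀ (g k : G) (x : H), (ρ g : H →L[ℂ] H) ((ρ k : H →L[ℂ] H) x)
      = (ρ (g * k) : H →L[ℂ] H) x := by
    intro g k x
    rw [map_mul]
    rfl
  have hvS : v ∈ S := ⟨1, by show (ρ (1:G) : H →L[ℂ] H) v = v; rw [map_one]; rfl⟩
  have hCne : C.Nonempty := ⟨v, subset_closure (subset_convexHull ℝ S hvS)⟩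
  have hCconv : Convex ℝ C := (convex_convexHull ℝ S).closure
  have hCcomplete : IsComplete C := isClosed_closure.isComplete
  -- image of S under ρ g is S
  have hSimg : ∀ g : G, (fun x => (ρ g : H →L[ℂ] H) x) '' S = S := by
    intro g
    ext x
    constructor
    · rintro ⟨y, ⟨k, rfl⟩, rfl⟩
      exact ⟨g * k, (hmul g k v).symm⟩
    · rintro ⟨k, rfl⟩
      refine ⟨(ρ (g⁻¹ * k) : H →L[ℂ] H) v, ⟨g⁻¹ * k, rfl⟩, ?_⟩
      show (ρ g : H →L[ℂ] H) ((ρ (g⁻¹ * k) : H →L[ℂ] H) v) = (ρ k : H →L[ℂ] H) v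
      rw [hmul, mul_inv_cancel_left]
  have hCimg : ∀ g : G, (fun x => (ρ g : H →L[ℂ] H) x) '' C ⊆ C := by
    intro g
    have hlin : IsLinearMap ℝ (fun x : H => (ρ g : H →L[ℂ] H) x) :=
      ⟨fun x y => map_add _ x y, fun c x => map_smul ((ρ g : H →L[ℂ] H).restrictScalars ℝ) c x⟩
    calc (fun x => (ρ g : H →L[ℂ] H) x) '' C
        ⊆ closure ((fun x => (ρ g : H →L[ℂ] H) x) '' (convexHull ℝ S)) :=
          image_closure_subset_closure_image (ρ g : H →L[ℂ] H).continuous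
      _ = closure (convexHull ℝ ((fun x => (ρ g : H →L[ℂ] H) x) '' S)) := by
          rw [hlin.image_convexHull]
      _ = C := by rw [hSimg g]
  obtain ⟨w, hwC, hwmin⟩ := exists_norm_eq_iInf_of_complete_convex hCne hCcomplete hCconv 0
  refine ⟨w, ?_, ?_⟩
  · intro g
    have hg : (ρ g : H →L[ℂ] H) w ∈ C := hCimg g ⟨w, hwC, rfl⟩
    have hnorm : ‖(0 : H) - (ρ g : H →L[ℂ] H) w‖ = ⨅ x : C, ‖(0:H) - x‖ := by
      rw [zero_sub, norm_neg, Unitary.norm_map, ← norm_neg, ← zero_sub, hwmin]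
    have h1 := (norm_eq_iInf_iff_real_inner_le_zero hCconv hwC).mp hwmin _ hg
    have h2 := (norm_eq_iInf_iff_real_inner_le_zero hCconv hg).mp hnorm _ hwC
    have key : ⟪w - (ρ g : H →L[ℂ] H) w, w - (ρ g : H →L[ℂ] H) w⟫_ℝ ≤ 0 := by
      have := add_nonpos h1 h2
      rw [zero_sub, zero_sub] at this
      have heq : ⟪-w, (ρ g : H →L[ℂ] H) w - w⟫_ℝ + ⟪-((ρ g : H →L[ℂ] H) w), w - (ρ g : H →L[ℂ] H) w⟫_ℝ
          = ⟪w - (ρ g : H →L[ℂ] H) w, w - (ρ g : H →L[ℂ] H) w⟫_ℝ := by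
        simp only [inner_neg_left, inner_sub_left, inner_sub_right]
        ring
      rw [heq] at this
      exact this
    have hz := real_inner_self_nonpos.mp key
    rw [sub_eq_zero] at hz
    exact hz.symm
  · have hr : (0:ℝ) ≤ Real.sqrt (2 * ε) := Real.sqrt_nonneg _
    have hSball : S ⊆ Metric.closedBall v (Real.sqrt (2 * ε)) := by
      rintro x ⟨g, rfl⟩
      rw [Metric.mem_closedBall, dist_eq_norm]
      have hnormg : ‖(ρ g : H →L[ℂ] H) v‖ = 1 := by rw [Unitary.norm_map, hv]
      have hsq : ‖(ρ g : H →L[ℂ] H) v - v‖ ^ 2 ≤ 2 * ε := by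
        rw [norm_sub_sq_real, hnormg, hv, hre]
        have := h g
        nlinarith
      nlinarith [Real.sq_sqrt (by positivity : (0:ℝ) ≤ 2 * ε), norm_nonneg ((ρ g : H →L[ℂ] H) v - v), Real.sqrt_nonneg (2 * ε)]
    have hCball : C ⊆ Metric.closedBall v (Real.sqrt (2 * ε)) :=
      closure_minimal (convexHull_min hSball (convex_closedBall v _)) Metric.isClosed_closedBall
    have := hCball hwC
    rwa [Metric.mem_closedBall, dist_eq_norm] at this
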